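/- Let T be a finite tree (a finite connected acyclic simple graph) and let G be the line graph of T, i.e., the simple graph whose vertices are the edges of T, with two distinct edges adjacent in G if and only if they share an endpoint in T. Then for every weight function w : V(G) → ℕ, γ^i_w(G) = γ_w(G); that is, the weighted independent domination number equals the weighted domination number. -/

import Mathlib

open Finset

variable {V : Type*}

/-- The closed neighborhood of a vertex `v`: `{v}` together with its neighbors. -/
def closedNbr [Fintype V] [DecidableEq V] (G : SimpleGraph V) [DecidableRel G.Adj]
    (v : V) : Finset V :=
  insert v (G.neighborFinset v)

/-- `f` `w`-dominates the set `U`: for every `u ∈ U`, the `f`-sum over the closed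
neighborhood of `u` is at least `w u`. -/
def WDominates [Fintype V] [DecidableEq V] (G : SimpleGraph V) [DecidableRel G.Adj]
    (w : V → ℕ) (f : V → ℕ) (U : Set V) : Prop :=
  ∀ u ∈ U, w u ≤ ∑ x ∈ closedNbr G u, f x

/-- The weighted domination number `γ_w(G)`: the minimum size of a `w`-dominating function. -/
noncomputable def gammaW [Fintype V] [DecidableEq V] (G : SimpleGraph V)
    [DecidableRel G.Adj] (w : V → ℕ) : ℕ :=
  sInf {n | ∃ f : V → ℕ, WDominates G w f Set.univ ∧ ∑ v, f v = n}

/-- The weighted independent domination number `γ^i_w(G)`: the maximum, over all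
independent sets `I`, of the minimum size of a function `w`-dominating `I`. -/
noncomputable def gammaIW [Fintype V] [DecidableEq V] (G : SimpleGraph V)
    [DecidableRel G.Adj] (w : V → ℕ) : ℕ :=
  sSup {m | ∃ I : Set V,
    (∀ u ∈ I, ∀ v ∈ I, u ≠ v → ¬ G.Adj u v) ∧
    m = sInf {n | ∃ f : V → ℕ, WDominates G w f I ∧ ∑ v, f v = n}}

/-- A set is dispersed if every two distinct vertices in it are at distance at least 3:
they are non-adjacent and have no common neighbor. -/
def Dispersed (G : SimpleGraph V) (D : Set V) : Prop :=
  ∀ u ∈ D, ∀ v ∈ D, u ≠ v → ¬ G.Adj u v ∧ ∀ x, ¬(G.Adj u x ∧ G.Adj x v)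

/-- `ρ_w(G)`: the maximum total weight of a dispersed set. -/
noncomputable def rhoW [Fintype V] (G : SimpleGraph V) (w : V → ℕ) : ℕ :=
  sSup {m | ∃ D : Finset V, Dispersed G ↑D ∧ ∑ v ∈ D, w v = m}

open SimpleGraph

section Aux

variable {W : Type*} {T : SimpleGraph W}

lemma concat_isPath {u v w : W} {P : T.Walk u v} (hP : P.IsPath) (h : T.Adj v w)
    (hw : w ∉ P.support) : (P.concat h).IsPath := by
  rw [← SimpleGraph.Walk.isPath_reverse_iff, SimpleGraph.Walk.reverse_concat,
    SimpleGraph.Walk.cons_isPath_iff]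
  exact ⟨hP.reverse, by simpa using hw⟩

lemma tree_dist_ne (hT : T.IsTree) {r x y : W} (hxy : T.Adj x y) : T.dist r x ≠ T.dist r y := by
  intro h
  obtain ⟨P, hPl⟩ := (hT.1 r x).exists_walk_length_eq_dist
  have hP : P.IsPath := P.isPath_of_length_eq_dist hPl
  have hy : y ∉ P.support := by
    intro hy
    obtain ⟨q, q', rfl⟩ := SimpleGraph.Walk.mem_support_iff_exists_append.mp hy
    have h1 : T.dist r y ≤ q.length := SimpleGraph.dist_le q
    have h2 : q.length + q'.length = T.dist r x := by
      rw [← SimpleGraph.Walk.length_append]; exact hPl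
    have h0 : q'.length = 0 := by omega
    exact hxy.ne (q'.eq_of_length_eq_zero h0).symm
  obtain ⟨Q, hQl⟩ := (hT.1 r y).exists_walk_length_eq_dist
  have hQ : Q.IsPath := Q.isPath_of_length_eq_dist hQl
  have heq := (hT.existsUnique_path r y).unique (concat_isPath hP hxy hy) hQ
  have hlen : (P.concat hxy).length = Q.length := by rw [heq]
  rw [SimpleGraph.Walk.length_concat, hPl, hQl, h] at hlen
  omega

lemma tree_adj_dist (hT : T.IsTree) (r : W) {x y : W} (hxy : T.Adj x y) :
    T.dist r y = T.dist r x + 1 ∨ T.dist r x = T.dist r y + 1 := by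
  have h1 : T.dist x y = 1 := by rwa [SimpleGraph.dist_eq_one_iff_adj]
  have h2 : T.dist r y ≤ T.dist r x + 1 := by
    have := hT.1.dist_triangle (u := r) (v := x) (w := y); omega
  have h3 : T.dist r x ≤ T.dist r y + 1 := by
    have h1' : T.dist y x = 1 := by rwa [SimpleGraph.dist_eq_one_iff_adj, adj_comm]
    have := hT.1.dist_triangle (u := r) (v := y) (w := x); omega
  have := tree_dist_ne hT (r := r) hxy
  omega

lemma tree_parent_exists (hT : T.IsTree) {r v : W} (hv : 0 < T.dist r v) :
    ∃ p, T.Adj v p ∧ T.dist r p + 1 = T.dist r v := by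
  obtain ⟨P, hPl⟩ := (hT.1 v r).exists_walk_length_eq_dist
  have hvr : 0 < T.dist v r := by rwa [SimpleGraph.dist_comm]
  cases P with
  | nil => simp at hPl; rw [SimpleGraph.dist_self] at hvr; omega
  | @cons _ p _ h q =>
    refine ⟨p, h, ?_⟩
    have h1 : T.dist v r = q.length + 1 := by simpa using hPl.symm
    have h2 : T.dist r p ≤ q.length := by
      have := SimpleGraph.dist_le q.reverse; simpa using this
    rcases tree_adj_dist hT r h with h3 | h3 <;> rw [SimpleGraph.dist_comm] at h1 <;> omega

lemma tree_parent_unique (hT : T.IsTree) {r v p₁ p₂ : W} (h1 : T.Adj v p₁) (h2 : T.Adj v p₂)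
    (hd1 : T.dist r p₁ + 1 = T.dist r v) (hd2 : T.dist r p₂ + 1 = T.dist r v) : p₁ = p₂ := by
  have key : ∀ p : W, T.Adj v p → T.dist r p + 1 = T.dist r v →
      ∃ (P : T.Walk r v), P.IsPath ∧ P.reverse.support.tail.head? = some p := by
    intro p hp hd
    obtain ⟨P, hPl⟩ := (hT.1 r p).exists_walk_length_eq_dist
    have hP : P.IsPath := P.isPath_of_length_eq_dist hPl
    have hv : v ∉ P.support := by
      intro hv
      obtain ⟨q, q', rfl⟩ := SimpleGraph.Walk.mem_support_iff_exists_append.mp hv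
      have ha : T.dist r v ≤ q.length := SimpleGraph.dist_le q
      have hb : q.length + q'.length = T.dist r p := by
        rw [← SimpleGraph.Walk.length_append]; exact hPl
      omega
    refine ⟨P.concat hp.symm, concat_isPath hP hp.symm hv, ?_⟩
    rw [SimpleGraph.Walk.reverse_concat, SimpleGraph.Walk.support_cons, List.tail_cons,
      SimpleGraph.Walk.support_eq_cons P.reverse, List.head?_cons]
  obtain ⟨P₁, hP₁, hh₁⟩ := key p₁ h1 hd1
  obtain ⟨P₂, hP₂, hh₂⟩ := key p₂ h2 hd2
  have := (hT.existsUnique_path r v).unique hP₁ hP₂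
  rw [this, hh₂] at hh₁
  exact (Option.some_injective _ hh₁).symm

/-- depth of an edge relative to root r -/
noncomputable def dep (T : SimpleGraph W) (r : W) (e : Sym2 W) : ℕ :=
  Sym2.lift ⟨fun a b => max (T.dist r a) (T.dist r b), fun a b => max_comm _ _⟩ e

@[simp] lemma dep_mk (r a b : W) : dep T r s(a, b) = max (T.dist r a) (T.dist r b) := rfl

lemma edge_decomp (e : Sym2 W) (he : e ∈ T.edgeSet) : ∃ a b, T.Adj a b ∧ e = s(a, b) := by
  obtain ⟨⟨a, b⟩, rfl⟩ := Quot.exists_rep e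
  exact ⟨a, b, he, rfl⟩

lemma dist_le_dep {r x : W} {g : Sym2 W} (hx : x ∈ g) : T.dist r x ≤ dep T r g := by
  obtain ⟨y, rfl⟩ := Sym2.mem_iff_exists.mp hx
  simp


lemma subA (hT : T.IsTree) {r x z : W} {g : Sym2 W} (hg : g ∈ T.edgeSet) (hx : x ∈ g)
    (hdep : dep T r g ≤ T.dist r x) (hz : T.Adj x z) (hdz : T.dist r z + 1 = T.dist r x) :
    g = s(x, z) := by
  obtain ⟨y, rfl⟩ := Sym2.mem_iff_exists.mp hx
  have hxy : T.Adj x y := T.mem_edgeSet.mp hg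
  have hy : T.dist r y ≤ T.dist r x := le_trans (by simp) hdep
  have hdy : T.dist r y + 1 = T.dist r x := by
    rcases tree_adj_dist hT r hxy with h | h <;> omega
  rw [tree_parent_unique hT hxy hz hdy hdz]

lemma key_geom (hT : T.IsTree) (r : W) {u v p : W} (huv : T.Adj u v) (hvp : T.Adj v p)
    (hdu : T.dist r u = T.dist r v + 1) (hdp : T.dist r p + 1 = T.dist r v)
    {g h : Sym2 W} (hg : g ∈ T.edgeSet) (hh : h ∈ T.edgeSet)
    (hgh : ∃ x, x ∈ g ∧ x ∈ h) (hhe : ∃ x, x ∈ h ∧ x ∈ s(u, v))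
    (hdepg : dep T r g ≤ T.dist r u) :
    v ∈ g ∨ p ∈ g := by
  set k := T.dist r v with hk
  obtain ⟨y, hyg, hyh⟩ := hgh
  obtain ⟨x, hxh, hxe⟩ := hhe
  -- "near": if t ∈ g with dist r t = k+1 and Adj v t, then v ∈ g
  have near : ∀ t : W, t ∈ g → T.dist r t = k + 1 → T.Adj t v → v ∈ g := by
    intro t htg hdt hadj
    have := subA hT (r := r) hg htg (by omega) hadj (by omega)
    rw [this]; simp
  obtain ⟨x', rfl⟩ := Sym2.mem_iff_exists.mp hxh
  have hxx' : T.Adj x x' := T.mem_edgeSet.mp hh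
  rcases Sym2.mem_iff.mp hxe with rfl | rfl
  · -- x = u
    rcases tree_adj_dist hT r hxx' with hd | hd
    · -- dist x' = dist u + 1 = k+2 : y = u or contradiction
      rcases Sym2.mem_iff.mp hyh with rfl | rfl
      · exact Or.inl (near y hyg hdu huv)
      · exfalso; have := dist_le_dep (T := T) (r := r) hyg; omega
    · -- dist x' = k : x' = v
      have hx'v : x' = v := tree_parent_unique hT (r := r) hxx' huv (by omega) (by omega)
      subst hx'v
      rcases Sym2.mem_iff.mp hyh with rfl | rfl
      · exact Or.inl (near y hyg hdu huv)
      · exact Or.inl hyg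
  · -- x = v
    rcases tree_adj_dist hT r hxx' with hd | hd
    · -- dist x' = k+1
      rcases Sym2.mem_iff.mp hyh with rfl | rfl
      · exact Or.inl hyg
      · exact Or.inl (near y hyg (by omega) hxx'.symm)
    · -- dist x' = k-1 : x' = p
      have hx'p : x' = p := tree_parent_unique hT (r := r) hxx' hvp (by omega) (by omega)
      subst hx'p
      rcases Sym2.mem_iff.mp hyh with rfl | rfl
      · exact Or.inl hyg
      · exact Or.inr hyg

open Finset

section Comb

variable [Fintype W] [DecidableEq W] [DecidableRel T.Adj] [Fintype T.edgeSet]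
variable (G : SimpleGraph T.edgeSet) [DecidableRel G.Adj]
variable (hG : ∀ e f : T.edgeSet, G.Adj e f ↔
      e ≠ f ∧ ∃ x : W, x ∈ (e : Sym2 W) ∧ x ∈ (f : Sym2 W))

include hG in
/-- Membership in a closed neighborhood is exactly sharing a vertex. -/
lemma mem_closedNbr_iff (a b : T.edgeSet) :
    a ∈ closedNbr G b ↔ ∃ x : W, x ∈ (a : Sym2 W) ∧ x ∈ (b : Sym2 W) := by
  rw [closedNbr, Finset.mem_insert, SimpleGraph.mem_neighborFinset]
  constructor
  · rintro (rfl | hadj)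
    · obtain ⟨x, y, hxy, hab⟩ := edge_decomp (a : Sym2 W) a.2
      exact ⟨x, by rw [hab]; simp, by rw [hab]; simp⟩
    · obtain ⟨hne, x, hx1, hx2⟩ := (hG b a).mp hadj
      exact ⟨x, hx2, hx1⟩
  · rintro ⟨x, hx1, hx2⟩
    by_cases hab : a = b
    · exact Or.inl hab
    · exact Or.inr ((hG b a).mpr ⟨Ne.symm hab, x, hx2, hx1⟩)

lemma wdom_self (w : T.edgeSet → ℕ) : WDominates G w w Set.univ :=
  fun u _ => Finset.single_le_sum (fun i _ => Nat.zero_le _) (Finset.mem_insert_self u _)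

lemma gammaW_attained (w : T.edgeSet → ℕ) :
    ∃ f : T.edgeSet → ℕ, WDominates G w f Set.univ ∧ ∑ v, f v = gammaW G w :=
  Nat.sInf_mem (⟨∑ v, w v, w, wdom_self G w, rfl⟩ :
    Set.Nonempty {n | ∃ f : T.edgeSet → ℕ, WDominates G w f Set.univ ∧ ∑ v, f v = n})

lemma gammaW_le (w f : T.edgeSet → ℕ) (hf : WDominates G w f Set.univ) :
    gammaW G w ≤ ∑ v, f v :=
  Nat.sInf_le ⟨f, hf, rfl⟩

include hG in
lemma main_lemma (hT : T.IsTree) : ∀ (n : ℕ) (w : T.edgeSet → ℕ), ∑ v, w v ≤ n →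
    ∃ D : Finset T.edgeSet, Dispersed G ↑D ∧ (∀ d ∈ D, 0 < w d) ∧
      gammaW G w ≤ ∑ d ∈ D, w d := by
  intro n
  induction n using Nat.strong_induction_on with
  | _ n IH =>
  intro w hw
  classical
  by_cases hpos : ∀ g, w g = 0
  · refine ⟨∅, by simp [Dispersed], by simp, ?_⟩
    simpa using gammaW_le G w (fun _ => 0) (fun u _ => by simp [hpos])
  · push_neg at hpos
    have : Nonempty W := hT.1.nonempty
    obtain ⟨r⟩ := this
    set S : Finset T.edgeSet := Finset.univ.filter (fun g => 0 < w g) with hS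
    have hSne : S.Nonempty := by
      obtain ⟨g, hg⟩ := hpos
      exact ⟨g, by simp [hS, Nat.pos_of_ne_zero hg]⟩
    obtain ⟨e, heS, hemax⟩ := S.exists_max_image (fun g => dep T r (g : Sym2 W)) hSne
    have hwe : 0 < w e := by simpa [hS] using heS
    obtain ⟨u, v, huv, heq, hdu⟩ : ∃ u v, T.Adj u v ∧ (e : Sym2 W) = s(u, v) ∧
        T.dist r u = T.dist r v + 1 := by
      obtain ⟨a, b, hab, hab2⟩ := edge_decomp (e : Sym2 W) e.2
      rcases tree_adj_dist hT r hab with h | h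
      · exact ⟨b, a, hab.symm, by rw [hab2, Sym2.eq_swap], h⟩
      · exact ⟨a, b, hab, hab2, h⟩
    have hdepe : dep T r (e : Sym2 W) = T.dist r u := by
      rw [heq, dep_mk]; omega
    have hdmax : ∀ g : T.edgeSet, 0 < w g → dep T r (g : Sym2 W) ≤ T.dist r u := by
      intro g hg
      rw [← hdepe]
      exact hemax g (by simp [hS, hg])
    by_cases hk : T.dist r v = 0
    · -- star case: every positive edge contains v
      have hrv : r = v := (hT.1.dist_eq_zero_iff).mp hk
      have hcov : ∀ g : T.edgeSet, 0 < w g → v ∈ (g : Sym2 W) := by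
        intro g hg
        obtain ⟨a, b, hab, hab2⟩ := edge_decomp (g : Sym2 W) g.2
        have h1 : dep T r (g : Sym2 W) ≤ 1 := by
          have := hdmax g hg; omega
        rw [hab2, dep_mk] at h1
        rw [hab2, Sym2.mem_iff]
        rcases tree_adj_dist hT r hab with h | h
        · have : T.dist r a = 0 := by omega
          exact Or.inl ((hT.1.dist_eq_zero_iff).mp this ▸ hrv ▸ rfl)
        · have : T.dist r b = 0 := by omega
          exact Or.inr ((hT.1.dist_eq_zero_iff).mp this ▸ hrv ▸ rfl)
      obtain ⟨m, hmS, hmmax⟩ := S.exists_max_image w hSne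
      have hwm : 0 < w m := by simpa [hS] using hmS
      refine ⟨{m}, ?_, by simpa using hwm, ?_⟩
      · intro a ha b hb hab
        simp only [Finset.coe_singleton, Set.mem_singleton_iff] at ha hb
        exact absurd (ha.trans hb.symm) hab
      · rw [Finset.sum_singleton]
        have hdom : WDominates G w (fun a => if a = m then w m else 0) Set.univ := by
          intro g _
          rcases Nat.eq_zero_or_pos (w g) with h0 | h0
          · omega
          · have hmem : m ∈ closedNbr G g := by
              rw [mem_closedNbr_iff G hG]
              exact ⟨v, hcov m hwm, hcov g h0⟩
            calc w g ≤ w m := hmmax g (by simp [hS, h0])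
              _ = _ := by rw [Finset.sum_ite_eq' (closedNbr G g) m (fun _ => w m), if_pos hmem]
        simpa using gammaW_le G w _ hdom
    · -- main case: v has a parent p
      obtain ⟨p, hvp, hdp⟩ := tree_parent_exists hT (r := r) (Nat.pos_of_ne_zero hk)
      set e' : T.edgeSet := ⟨s(v, p), hvp⟩ with he'
      set c := w e with hc
      set w' : T.edgeSet → ℕ :=
        fun g => if v ∈ (g : Sym2 W) ∨ p ∈ (g : Sym2 W) then w g - c else w g with hw'
      have hCiff : ∀ g : T.edgeSet, (v ∈ (g : Sym2 W) ∨ p ∈ (g : Sym2 W)) ↔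
          (∃ x : W, x ∈ (g : Sym2 W) ∧ x ∈ (e' : Sym2 W)) := by
        intro g
        constructor
        · rintro (h | h)
          · exact ⟨v, h, by simp [he']⟩
          · exact ⟨p, h, by simp [he']⟩
        · rintro ⟨x, hx1, hx2⟩
          simp only [he'] at hx2
          rcases Sym2.mem_iff.mp hx2 with rfl | rfl
          · exact Or.inl hx1
          · exact Or.inr hx1
      have hCe : v ∈ (e : Sym2 W) ∨ p ∈ (e : Sym2 W) := Or.inl (by rw [heq]; simp)
      have hw'le : ∀ g, w' g ≤ w g := by
        intro g; simp only [hw']; split <;> omega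
      have hw'e : w' e = 0 := by
        simp only [hw', if_pos hCe]; omega
      have hsumlt : ∑ g, w' g < n := by
        have hlt : ∑ g, w' g < ∑ g, w g :=
          Finset.sum_lt_sum (fun i _ => hw'le i) ⟨e, Finset.mem_univ e, by omega⟩
        omega
      obtain ⟨D', hD'disp, hD'pos, hD'γ⟩ := IH _ hsumlt w' le_rfl
      -- γ_w ≤ γ_{w'} + c
      obtain ⟨f', hf', hf'sum⟩ := gammaW_attained G w'
      have hsplit : ∀ s : Finset T.edgeSet,
          ∑ x ∈ s, (f' x + if x = e' then c else 0) =
            (∑ x ∈ s, f' x) + (if e' ∈ s then c else 0) := by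
        intro s
        rw [Finset.sum_add_distrib, Finset.sum_ite_eq' s e' (fun _ => c)]
      have hfdom : WDominates G w (fun a => f' a + if a = e' then c else 0) Set.univ := by
        intro g _
        rw [hsplit]
        by_cases hC : v ∈ (g : Sym2 W) ∨ p ∈ (g : Sym2 W)
        · have hmem : e' ∈ closedNbr G g := by
            rw [mem_closedNbr_iff G hG]
            obtain ⟨x, hx1, hx2⟩ := (hCiff g).mp hC
            exact ⟨x, hx2, hx1⟩
          rw [if_pos hmem]
          have h1 : w' g = w g - c := by simp only [hw', if_pos hC]
          have h2 := hf' g (Set.mem_univ g)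
          omega
        · have hmem : e' ∉ closedNbr G g := by
            rw [mem_closedNbr_iff G hG]
            intro ⟨x, hx1, hx2⟩
            exact hC ((hCiff g).mpr ⟨x, hx2, hx1⟩)
          rw [if_neg hmem]
          have h1 : w' g = w g := by simp only [hw', if_neg hC]
          have h2 := hf' g (Set.mem_univ g)
          omega
      have hγ : gammaW G w ≤ gammaW G w' + c := by
        calc gammaW G w ≤ ∑ x, (f' x + if x = e' then c else 0) := gammaW_le G w _ hfdom
          _ = gammaW G w' + c := by
            rw [hsplit, if_pos (Finset.mem_univ e'), hf'sum]
      -- key geometric consequence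
      have key : ∀ d : T.edgeSet, 0 < w d →
          (∃ h : T.edgeSet, (∃ x : W, x ∈ (d : Sym2 W) ∧ x ∈ (h : Sym2 W)) ∧
            (∃ x : W, x ∈ (h : Sym2 W) ∧ x ∈ (e : Sym2 W))) →
          v ∈ (d : Sym2 W) ∨ p ∈ (d : Sym2 W) := by
        rintro d hd ⟨h, h1, h2⟩
        refine key_geom hT r huv hvp hdu hdp d.2 h.2 h1 ?_ (hdmax d hd)
        rw [← heq]; exact h2
      by_cases hex : ∃ d ∈ D', v ∈ (d : Sym2 W) ∨ p ∈ (d : Sym2 W)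
      · obtain ⟨d, hdD, hdC⟩ := hex
        refine ⟨D', hD'disp, fun a ha => lt_of_lt_of_le (hD'pos a ha) (hw'le a), ?_⟩
        have h1 : w' d + c ≤ w d := by
          have := hD'pos d hdD
          have h2 : w' d = w d - c := by simp only [hw', if_pos hdC]
          omega
        have hsum : ∑ x ∈ D', w' x + c ≤ ∑ x ∈ D', w x := by
          rw [← Finset.add_sum_erase _ w' hdD, ← Finset.add_sum_erase _ w hdD]
          have := Finset.sum_le_sum (fun i (_ : i ∈ D'.erase d) => hw'le i)
          omega
        omega
      · push_neg at hex
        have heD' : e ∉ D' := fun h => (not_or.mpr (hex e h)) hCe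
        have hwd : ∀ d ∈ D', w' d = w d := by
          intro d hd; simp only [hw', if_neg (not_or.mpr (hex d hd))]
        have hwpos : ∀ d ∈ D', 0 < w d := fun d hd =>
          lt_of_lt_of_le (hD'pos d hd) (hw'le d)
        refine ⟨insert e D', ?_, ?_, ?_⟩
        · -- dispersed
          have far : ∀ b ∈ D', (¬ G.Adj e b ∧ ∀ x, ¬ (G.Adj e x ∧ G.Adj x b)) ∧
              (¬ G.Adj b e ∧ ∀ x, ¬ (G.Adj b x ∧ G.Adj x e)) := by
            intro b hb
            have hbC : ¬ (v ∈ (b : Sym2 W) ∨ p ∈ (b : Sym2 W)) := not_or.mpr (hex b hb)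
            have hbpos := hwpos b hb
            have hve : v ∈ (e : Sym2 W) := by rw [heq]; simp
            constructor
            · constructor
              · intro hadj
                obtain ⟨_, x, hx1, hx2⟩ := (hG e b).mp hadj
                exact hbC (key b hbpos ⟨e, ⟨x, hx2, hx1⟩, ⟨v, hve, hve⟩⟩)
              · rintro x ⟨hadj1, hadj2⟩
                obtain ⟨_, y1, hy11, hy12⟩ := (hG e x).mp hadj1
                obtain ⟨_, y2, hy21, hy22⟩ := (hG x b).mp hadj2
                exact hbC (key b hbpos ⟨x, ⟨y2, hy22, hy21⟩, ⟨y1, hy12, hy11⟩⟩)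
            · constructor
              · intro hadj
                obtain ⟨_, x, hx1, hx2⟩ := (hG b e).mp hadj
                exact hbC (key b hbpos ⟨e, ⟨x, hx1, hx2⟩, ⟨v, hve, hve⟩⟩)
              · rintro x ⟨hadj1, hadj2⟩
                obtain ⟨_, y1, hy11, hy12⟩ := (hG b x).mp hadj1
                obtain ⟨_, y2, hy21, hy22⟩ := (hG x e).mp hadj2
                exact hbC (key b hbpos ⟨x, ⟨y1, hy11, hy12⟩, ⟨y2, hy21, hy22⟩⟩)
          intro a ha b hb hab
          simp only [Finset.coe_insert, Set.mem_insert_iff, Finset.mem_coe] at ha hb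
          rcases ha with rfl | ha <;> rcases hb with rfl | hb
          · exact absurd rfl hab
          · exact (far b hb).1
          · exact (far a ha).2
          · exact hD'disp a ha b hb hab
        · intro d hd
          rcases Finset.mem_insert.mp hd with rfl | hd
          · exact hwe
          · exact hwpos d hd
        · rw [Finset.sum_insert heD']
          have : ∑ x ∈ D', w x = ∑ x ∈ D', w' x := by
            exact (Finset.sum_congr rfl (fun x hx => (hwd x hx).symm))
          omega

end Comb

end Aux

/-- For the line graph `G` of a finite tree `T`, `γ^i_w(G) = γ_w(G)`
for every weight function `w`. -/
theorem lineGraph_tree_gammaI_eq_gamma {W : Type*} [Fintype W] [DecidableEq W]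
    (T : SimpleGraph W) [DecidableRel T.Adj] (hT : T.IsTree)
    [Fintype T.edgeSet]
    (G : SimpleGraph T.edgeSet) [DecidableRel G.Adj]
    (hG : ∀ e f : T.edgeSet, G.Adj e f ↔
      e ≠ f ∧ ∃ x : W, x ∈ (e : Sym2 W) ∧ x ∈ (f : Sym2 W))
    (w : T.edgeSet → ℕ) :
    gammaIW G w = gammaW G w := by
  apply le_antisymm
  · -- γ^i ≤ γ
    apply csSup_le
    · exact ⟨_, ∅, fun u hu => absurd hu (Set.notMem_empty u), rfl⟩
    · rintro m ⟨I, hI, rfl⟩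
      obtain ⟨f, hf, hfs⟩ := gammaW_attained G w
      exact Nat.sInf_le ⟨f, fun u _ => hf u (Set.mem_univ u), hfs⟩
  · -- γ ≤ γ^i
    obtain ⟨D, hdisp, hpos, hγ⟩ := main_lemma G hG hT (∑ v, w v) w le_rfl
    set m := sInf {n | ∃ f : T.edgeSet → ℕ, WDominates G w f ↑D ∧ ∑ v, f v = n} with hm
    have hγm : gammaW G w ≤ m := by
      apply le_csInf
      · exact ⟨∑ v, w v, w, fun u _ => wdom_self G w u (Set.mem_univ u), rfl⟩
      · rintro n ⟨f, hf, rfl⟩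
        have hdisj : (↑D : Set T.edgeSet).PairwiseDisjoint (closedNbr G) := by
          intro a ha b hb hab
          rw [Function.onFun, Finset.disjoint_left]
          intro x hxa hxb
          rw [closedNbr, Finset.mem_insert, SimpleGraph.mem_neighborFinset] at hxa hxb
          rcases hxa with rfl | hxa <;> rcases hxb with rfl | hxb
          · exact hab rfl
          · exact (hdisp b hb x ha (fun h => hab h.symm)).1 hxb
          · exact (hdisp a ha x hb hab).1 hxa
          · exact (hdisp a ha b hb hab).2 x ⟨hxa, hxb.symm⟩
        calc gammaW G w ≤ ∑ d ∈ D, w d := hγ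
          _ ≤ ∑ d ∈ D, ∑ x ∈ closedNbr G d, f x :=
            Finset.sum_le_sum (fun d hd => hf d (Finset.mem_coe.mpr hd))
          _ = ∑ x ∈ D.biUnion (closedNbr G), f x := (Finset.sum_biUnion hdisj).symm
          _ ≤ ∑ v, f v :=
            Finset.sum_le_sum_of_subset (Finset.subset_univ _)
    have hmem : m ∈ {m | ∃ I : Set T.edgeSet,
        (∀ u ∈ I, ∀ v ∈ I, u ≠ v → ¬ G.Adj u v) ∧
        m = sInf {n | ∃ f : T.edgeSet → ℕ, WDominates G w f I ∧ ∑ v, f v = n}} :=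
      ⟨↑D, fun a ha b hb hab => (hdisp a ha b hb hab).1, hm⟩
    have hbdd : BddAbove {m | ∃ I : Set T.edgeSet,
        (∀ u ∈ I, ∀ v ∈ I, u ≠ v → ¬ G.Adj u v) ∧
        m = sInf {n | ∃ f : T.edgeSet → ℕ, WDominates G w f I ∧ ∑ v, f v = n}} := by
      refine ⟨∑ v, w v, ?_⟩
      rintro m' ⟨I, hI, rfl⟩
      exact Nat.sInf_le ⟨w, fun u _ => wdom_self G w u (Set.mem_univ u), rfl⟩
    exact le_trans hγm (le_csSup hbdd hmem)
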